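/- Let 𝒮 and 𝒲 be standard Borel spaces, P_S a probability measure on 𝒮, κ a Markov kernel from 𝒮 to 𝒲, and p_W = ∫ κ(s) dP_S(s) the marginal of the weights. Then for every probability measure q on 𝒲, ∫ KL(κ(s) ‖ q) dP_S(s) = ∫ KL(κ(s) ‖ p_W) dP_S(s) + KL(p_W ‖ q). In particular, the marginal p_W minimizes the expected Kullback–Leibler divergence q ↦ ∫ KL(κ(s) ‖ q) dP_S(s) over all probability measures q on 𝒲. -/

import Mathlib

open MeasureTheory ProbabilityTheory Real Classical ENNReal

/-- The Kullback–Leibler divergence `KL(ν‖μ)` valued in `[0,∞]`, equal to `∫ log (dν/dμ) dν`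
when `ν ≪ μ` (and the log-likelihood ratio is integrable), and `+∞` otherwise. -/
noncomputable def klDiv {Ω : Type*} [MeasurableSpace Ω] (ν μ : Measure Ω) : ℝ≥0∞ :=
  if ν ≪ μ ∧ Integrable (llr ν μ) ν then ENNReal.ofReal (∫ ω, llr ν μ ω ∂ν) else ⊤

section KLOracleHelpers

open Function

namespace KLOracle

section Basic

variable {α : Type*} [MeasurableSpace α]

lemma ofReal_max_zero (x : ℝ) : ENNReal.ofReal (max x 0) = ENNReal.ofReal x := by
  rcases le_or_gt x 0 with h | h
  · simp [max_eq_right h, ENNReal.ofReal_eq_zero.2 h]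
  · rw [max_eq_left h.le]

lemma ofReal_integral_le_lintegral_ofReal (ν : Measure α) (f : α → ℝ) (hint : Integrable f ν) :
    ENNReal.ofReal (∫ x, f x ∂ν) ≤ ∫⁻ x, ENNReal.ofReal (f x) ∂ν := by
  calc ENNReal.ofReal (∫ x, f x ∂ν) ≤ ENNReal.ofReal (∫ x, max (f x) 0 ∂ν) :=
      ENNReal.ofReal_le_ofReal
        (integral_mono_ae hint hint.pos_part (ae_of_all _ fun x => le_max_left _ _))
    _ = ∫⁻ x, ENNReal.ofReal (max (f x) 0) ∂ν :=
      ofReal_integral_eq_lintegral_ofReal hint.pos_part (ae_of_all _ fun x => le_max_right _ _)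
    _ = ∫⁻ x, ENNReal.ofReal (f x) ∂ν := lintegral_congr fun x => ofReal_max_zero _

variable {α : Type*} [MeasurableSpace α]

lemma lintegral_ofReal_inv_rnDeriv_le_one (ν μ : Measure α) [IsProbabilityMeasure ν]
    [IsProbabilityMeasure μ] (h : ν ≪ μ) :
    ∫⁻ x, ENNReal.ofReal ((ν.rnDeriv μ x).toReal⁻¹) ∂ν ≤ 1 := by
  rw [← lintegral_rnDeriv_mul h (f := fun x => ENNReal.ofReal ((ν.rnDeriv μ x).toReal⁻¹))
    ((Measure.measurable_rnDeriv ν μ).ennreal_toReal.inv.ennreal_ofReal.aemeasurable)]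
  calc ∫⁻ x, ν.rnDeriv μ x * ENNReal.ofReal ((ν.rnDeriv μ x).toReal⁻¹) ∂μ
      ≤ ∫⁻ _, 1 ∂μ := by
        refine lintegral_mono_ae ?_
        filter_upwards [Measure.rnDeriv_lt_top ν μ] with x hx
        rcases eq_or_ne (ν.rnDeriv μ x) 0 with h0 | h0
        · simp [h0]
        · have hpos : 0 < (ν.rnDeriv μ x).toReal := ENNReal.toReal_pos h0 hx.ne
          rw [ENNReal.ofReal_inv_of_pos hpos, ENNReal.ofReal_toReal hx.ne,
            ENNReal.mul_inv_cancel h0 hx.ne]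
    _ = 1 := by simp

lemma lintegral_ofReal_neg_llr_le_one (ν μ : Measure α) [IsProbabilityMeasure ν]
    [IsProbabilityMeasure μ] (h : ν ≪ μ) :
    ∫⁻ x, ENNReal.ofReal (-llr ν μ x) ∂ν ≤ 1 := by
  refine le_trans (lintegral_mono_ae ?_) (lintegral_ofReal_inv_rnDeriv_le_one ν μ h)
  filter_upwards [Measure.rnDeriv_pos h, h.ae_le (Measure.rnDeriv_lt_top ν μ)] with x hp ht
  refine ENNReal.ofReal_le_ofReal ?_
  have hpos : 0 < (ν.rnDeriv μ x).toReal := ENNReal.toReal_pos hp.ne' ht.ne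
  have : -llr ν μ x = log (ν.rnDeriv μ x).toReal⁻¹ := by rw [llr, Real.log_inv]
  rw [this]
  calc log (ν.rnDeriv μ x).toReal⁻¹ ≤ (ν.rnDeriv μ x).toReal⁻¹ - 1 :=
    log_le_sub_one_of_pos (by positivity)
  _ ≤ (ν.rnDeriv μ x).toReal⁻¹ := by linarith

lemma integrable_inv_rnDeriv (ν μ : Measure α) [IsProbabilityMeasure ν]
    [IsProbabilityMeasure μ] (h : ν ≪ μ) :
    Integrable (fun x => (ν.rnDeriv μ x).toReal⁻¹) ν := by
  refine ⟨(Measure.measurable_rnDeriv ν μ).ennreal_toReal.inv.aestronglyMeasurable, ?_⟩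
  rw [hasFiniteIntegral_iff_norm]
  refine lt_of_le_of_lt (le_of_eq (lintegral_congr fun x => ?_))
    ((lintegral_ofReal_inv_rnDeriv_le_one ν μ h).trans_lt one_lt_top)
  rw [Real.norm_eq_abs, abs_of_nonneg (by positivity)]

lemma integral_inv_rnDeriv_le_one (ν μ : Measure α) [IsProbabilityMeasure ν]
    [IsProbabilityMeasure μ] (h : ν ≪ μ) :
    ∫ x, (ν.rnDeriv μ x).toReal⁻¹ ∂ν ≤ 1 := by
  rw [integral_eq_lintegral_of_nonneg_ae (f := fun x => (ν.rnDeriv μ x).toReal⁻¹) (ae_of_all _ fun x => by positivity)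
    (Measure.measurable_rnDeriv ν μ).ennreal_toReal.inv.aestronglyMeasurable]
  have := lintegral_ofReal_inv_rnDeriv_le_one ν μ h
  calc (∫⁻ x, ENNReal.ofReal ((ν.rnDeriv μ x).toReal⁻¹) ∂ν).toReal ≤ (1 : ℝ≥0∞).toReal :=
    ENNReal.toReal_mono one_ne_top this
  _ = 1 := by simp

lemma integral_llr_nonneg' (ν μ : Measure α) [IsProbabilityMeasure ν]
    [IsProbabilityMeasure μ] (h : ν ≪ μ) (hint : Integrable (llr ν μ) ν) :
    0 ≤ ∫ x, llr ν μ x ∂ν := by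
  have hinv := integrable_inv_rnDeriv ν μ h
  have hle : ∫ x, -llr ν μ x ∂ν ≤ ∫ x, ((ν.rnDeriv μ x).toReal⁻¹ - 1) ∂ν := by
    refine integral_mono_ae hint.neg (hinv.sub (integrable_const 1)) ?_
    filter_upwards [Measure.rnDeriv_pos h, h.ae_le (Measure.rnDeriv_lt_top ν μ)] with x hp ht
    have hpos : 0 < (ν.rnDeriv μ x).toReal := ENNReal.toReal_pos hp.ne' ht.ne
    have : -llr ν μ x = log (ν.rnDeriv μ x).toReal⁻¹ := by rw [llr, Real.log_inv]
    rw [this]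
    exact log_le_sub_one_of_pos (by positivity)
  rw [integral_neg] at hle
  rw [integral_sub hinv (integrable_const 1)] at hle
  simp only [integral_const, measure_univ, ENNReal.toReal_one, probReal_univ, smul_eq_mul, one_mul] at hle
  have := integral_inv_rnDeriv_le_one ν μ h
  linarith

lemma lintegral_ofReal_llr_le (ν μ : Measure α) [IsProbabilityMeasure ν]
    [IsProbabilityMeasure μ] (h : ν ≪ μ) (hint : Integrable (llr ν μ) ν) :
    ∫⁻ x, ENNReal.ofReal (llr ν μ x) ∂ν ≤ ENNReal.ofReal (∫ x, llr ν μ x ∂ν) + 1 := by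
  have hposint : Integrable (fun x => max (llr ν μ x) 0) ν := hint.pos_part
  have hnegint : Integrable (fun x => max (-llr ν μ x) 0) ν := hint.neg.pos_part
  have h1 : ∫⁻ x, ENNReal.ofReal (llr ν μ x) ∂ν
      = ENNReal.ofReal (∫ x, max (llr ν μ x) 0 ∂ν) := by
    rw [ofReal_integral_eq_lintegral_ofReal hposint
      (ae_of_all _ fun x => le_max_right _ _)]
    congr 1 with x
    rcases le_or_gt (llr ν μ x) 0 with h0 | h0
    · simp [ENNReal.ofReal_eq_zero.2 h0, max_eq_right h0]
    · rw [max_eq_left h0.le]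
  have h2 : ∫ x, max (llr ν μ x) 0 ∂ν = ∫ x, llr ν μ x ∂ν + ∫ x, max (-llr ν μ x) 0 ∂ν := by
    rw [← integral_add hint hnegint]
    congr 1 with x
    rcases le_or_gt (llr ν μ x) 0 with h0 | h0
    · rw [max_eq_right h0, max_eq_left (by linarith)]; ring
    · rw [max_eq_left h0.le, max_eq_right (by linarith)]; ring
  have h3 : ENNReal.ofReal (∫ x, max (-llr ν μ x) 0 ∂ν) ≤ 1 := by
    rw [ofReal_integral_eq_lintegral_ofReal hnegint
      (ae_of_all _ fun x => le_max_right _ _)]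
    refine le_trans (le_of_eq (lintegral_congr fun x => ?_))
      (lintegral_ofReal_neg_llr_le_one ν μ h)
    rcases le_or_gt (-llr ν μ x) 0 with h0 | h0
    · simp [ENNReal.ofReal_eq_zero.2 h0, max_eq_right h0]
    · rw [max_eq_left h0.le]
  rw [h1, h2]
  exact le_trans (ENNReal.ofReal_add_le) (by gcongr)

lemma llr_chain (ν μ ρ : Measure α) [SigmaFinite ν] [SigmaFinite μ] [SigmaFinite ρ]
    (hνμ : ν ≪ μ) (hμρ : μ ≪ ρ) :
    llr ν ρ =ᵐ[ν] fun x => llr ν μ x + llr μ ρ x := by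
  have h := Measure.rnDeriv_mul_rnDeriv (μ := ν) (ν := μ) (κ := ρ) hνμ
  filter_upwards [(hνμ.trans hμρ).ae_le h, Measure.rnDeriv_pos hνμ,
    hνμ.ae_le (Measure.rnDeriv_pos hμρ), hνμ.ae_le (Measure.rnDeriv_lt_top ν μ),
    (hνμ.trans hμρ).ae_le (Measure.rnDeriv_lt_top μ ρ)] with x h1 h2 h3 h4 h5
  have ha : (ν.rnDeriv μ x).toReal ≠ 0 := (ENNReal.toReal_pos h2.ne' h4.ne).ne'
  have hb : (μ.rnDeriv ρ x).toReal ≠ 0 := (ENNReal.toReal_pos h3.ne' h5.ne).ne'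
  simp only [llr]
  rw [← h1, Pi.mul_apply, ENNReal.toReal_mul, log_mul ha hb]

end Basic

section Kernels

variable {S W : Type*} [MeasurableSpace S] [MeasurableSpace W]
  [MeasurableSpace.CountablyGenerated W]
variable (PS : Measure S) [IsProbabilityMeasure PS] (κ : Kernel S W) [IsMarkovKernel κ]

set_option linter.unusedSectionVars false

noncomputable def gfun (κ : Kernel S W) (q : Measure W) : S → W → ℝ :=
  fun s w => log (Kernel.rnDeriv κ (Kernel.const S q) s w).toReal

lemma measurable_gfun (κ : Kernel S W) (q : Measure W) :
    Measurable (Function.uncurry (gfun κ q)) :=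
  (Kernel.measurable_rnDeriv κ (Kernel.const S q)).ennreal_toReal.log

lemma gfun_ae_eq (κ : Kernel S W) [IsFiniteKernel κ] (q : Measure W) [IsFiniteMeasure q]
    (s : S) : gfun κ q s =ᵐ[q] llr (κ s) q := by
  have h := Kernel.rnDeriv_eq_rnDeriv_measure (κ := κ) (η := Kernel.const S q) (a := s)
  rw [Kernel.const_apply] at h
  filter_upwards [h] with w hw
  simp only [gfun, llr, hw]

noncomputable def Gfun (κ : Kernel S W) (q : Measure W) : S → ℝ≥0∞ := fun s =>
  if κ s ≪ q ∧ ∫⁻ w, ENNReal.ofReal ‖gfun κ q s w‖ ∂κ s ≠ ⊤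
  then ENNReal.ofReal (∫ w, gfun κ q s w ∂κ s) else ⊤

lemma measurable_Gfun (κ : Kernel S W) [IsFiniteKernel κ] (q : Measure W) [IsFiniteMeasure q] :
    Measurable (Gfun κ q) := by
  have h1 : MeasurableSet {s | κ s ≪ q} := by
    have := Kernel.measurableSet_absolutelyContinuous κ (Kernel.const S q)
    simpa [Kernel.const_apply] using this
  have hmeas : Measurable fun s => ∫⁻ w, ENNReal.ofReal ‖gfun κ q s w‖ ∂κ s :=
    Measurable.lintegral_kernel_prod_right (by exact (measurable_gfun κ q).norm.ennreal_ofReal)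
  have hmeas2 : Measurable fun s => ENNReal.ofReal (∫ w, gfun κ q s w ∂κ s) :=
    (StronglyMeasurable.integral_kernel_prod_right
      (by exact (measurable_gfun κ q).stronglyMeasurable)).measurable.ennreal_ofReal
  have hset : MeasurableSet {s | κ s ≪ q ∧ ∫⁻ w, ENNReal.ofReal ‖gfun κ q s w‖ ∂κ s ≠ ⊤} := by
    exact h1.inter (hmeas (measurableSet_singleton ⊤)).compl
  exact Measurable.ite hset hmeas2 measurable_const

lemma klDiv_eq_Gfun (κ : Kernel S W) [IsFiniteKernel κ] (q : Measure W) [IsFiniteMeasure q]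
    (s : S) : klDiv (κ s) q = Gfun κ q s := by
  rcases Classical.em (κ s ≪ q) with hac | hac
  · have heq : gfun κ q s =ᵐ[κ s] llr (κ s) q := hac.ae_le (gfun_ae_eq κ q s)
    have hint_iff : Integrable (llr (κ s) q) (κ s) ↔
        ∫⁻ w, ENNReal.ofReal ‖gfun κ q s w‖ ∂κ s ≠ ⊤ := by
      constructor
      · intro h
        have h' : Integrable (gfun κ q s) (κ s) := h.congr heq.symm
        rw [← lt_top_iff_ne_top, ← hasFiniteIntegral_iff_norm]
        exact h'.hasFiniteIntegral
      · intro h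
        refine Integrable.congr ⟨?_, ?_⟩ heq
        · exact ((measurable_gfun κ q).comp measurable_prodMk_left).aestronglyMeasurable
        · rw [hasFiniteIntegral_iff_norm, lt_top_iff_ne_top]; exact h
    have hval : ∫ w, llr (κ s) q w ∂κ s = ∫ w, gfun κ q s w ∂κ s :=
      integral_congr_ae heq.symm
    rcases Classical.em (Integrable (llr (κ s) q) (κ s)) with hint | hint
    · rw [klDiv, if_pos ⟨hac, hint⟩, Gfun, if_pos ⟨hac, hint_iff.1 hint⟩, hval]
    · rw [klDiv, if_neg (fun hc => hint hc.2), Gfun,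
        if_neg (fun hc => hint (hint_iff.2 hc.2))]
  · rw [klDiv, if_neg (fun hc => hac hc.1), Gfun, if_neg (fun hc => hac hc.1)]

lemma isProbabilityMeasure_bind : IsProbabilityMeasure (PS.bind (fun s => κ s)) := by
  constructor
  rw [Measure.bind_apply MeasurableSet.univ (κ.measurable.aemeasurable)]
  simp

lemma bind_apply_eq {A : Set W} (hA : MeasurableSet A) :
    (PS.bind (fun s => κ s)) A = ∫⁻ s, κ s A ∂PS :=
  Measure.bind_apply hA (κ.measurable.aemeasurable)

lemma lintegral_bind_eq (f : W → ℝ≥0∞) (hf : Measurable f) :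
    ∫⁻ w, f w ∂(PS.bind (fun s => κ s)) = ∫⁻ s, ∫⁻ w, f w ∂κ s ∂PS :=
  Measure.lintegral_bind κ.measurable.aemeasurable hf.aemeasurable

lemma bind_eq_map_compProd :
    PS.bind (fun s => κ s) = (PS ⊗ₘ κ).map Prod.snd := by
  ext A hA
  rw [Measure.map_apply measurable_snd hA, Measure.compProd_apply (measurable_snd hA),
    bind_apply_eq PS κ hA]
  rfl

lemma integral_bind_eq (f : W → ℝ) (hf : StronglyMeasurable f)
    (hint : Integrable f (PS.bind (fun s => κ s))) :
    ∫ w, f w ∂(PS.bind (fun s => κ s)) = ∫ s, ∫ w, f w ∂κ s ∂PS := by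
  rw [bind_eq_map_compProd PS κ] at hint ⊢
  rw [integral_map measurable_snd.aemeasurable hf.aestronglyMeasurable]
  have hint2 : Integrable (fun p : S × W => f p.2) (PS ⊗ₘ κ) :=
    (integrable_map_measure hf.aestronglyMeasurable measurable_snd.aemeasurable).mp hint
  exact Measure.integral_compProd hint2
lemma ae_ac_bind (pW q : Measure W) [IsProbabilityMeasure pW] [IsProbabilityMeasure q]
    (hpW : pW = PS.bind (fun s => κ s)) (hac : ∀ᵐ s ∂PS, κ s ≪ q) (hpq : pW ≪ q) :
    ∀ᵐ s ∂PS, κ s ≪ pW := by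
  set η : Kernel S W := Kernel.const S pW with hη
  set ξ : Kernel S W := κ.singularPart η with hξdef
  have hξ_eq : ∀ s, ξ s = (κ s).singularPart pW := fun s => by
    rw [hξdef, Kernel.singularPart_eq_singularPart_measure, hη, Kernel.const_apply]
  suffices h0 : ∀ᵐ s ∂PS, ξ s = 0 by
    filter_upwards [h0] with s hs
    have hdec := (κ s).haveLebesgueDecomposition_add pW
    rw [← hξ_eq s, hs, zero_add] at hdec
    rw [hdec]
    exact withDensity_absolutelyContinuous _ _
  set d : S → W → ℝ≥0∞ := fun s w => Kernel.rnDeriv ξ (Kernel.const S q) s w with hd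
  have hd_meas : Measurable (uncurry d) := Kernel.measurable_rnDeriv _ _
  have hd_meas_right : ∀ w, Measurable fun s => d s w := fun w =>
    hd_meas.comp (measurable_id.prodMk measurable_const)
  have hd_meas_left : ∀ s, Measurable fun w => d s w := fun s =>
    hd_meas.comp (measurable_const.prodMk measurable_id)
  have hξ_ac : ∀ᵐ s ∂PS, ξ s ≪ q := by
    filter_upwards [hac] with s hs
    exact (Measure.absolutelyContinuous_of_le (hξ_eq s ▸ Measure.singularPart_le (κ s) pW)).trans hs
  have hξ_wd : ∀ᵐ s ∂PS, ξ s = q.withDensity (d s) := by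
    filter_upwards [hξ_ac] with s hs
    have h := Kernel.withDensity_rnDeriv_eq (κ := ξ) (η := Kernel.const S q) (a := s)
      (by rwa [Kernel.const_apply])
    rw [Kernel.withDensity_apply _ (Kernel.measurable_rnDeriv _ _), Kernel.const_apply] at h
    exact h.symm
  set m : W → ℝ≥0∞ := pW.rnDeriv q with hm
  have hm_meas : Measurable m := Measure.measurable_rnDeriv pW q
  have hpW_wd : q.withDensity m = pW := Measure.withDensity_rnDeriv_eq pW q hpq
  -- step 4
  have hprod : ∀ᵐ s ∂PS, ∫⁻ w, m w * d s w ∂q = 0 := by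
    filter_upwards [hξ_wd] with s hs
    have hsing : ξ s ⟂ₘ pW := by
      rw [hξ_eq s]; exact Measure.mutuallySingular_singularPart _ _
    obtain ⟨N, hN, hN1, hN2⟩ := hsing
    have hmN : ∀ᵐ w ∂q, w ∈ Nᶜ → m w = 0 := by
      have h1 : ∫⁻ w in Nᶜ, m w ∂q = 0 := by
        rw [← withDensity_apply m hN.compl, hpW_wd]; exact hN2
      exact (setLIntegral_eq_zero_iff hN.compl hm_meas).mp h1
    have hdN : ∀ᵐ w ∂q, w ∈ N → d s w = 0 := by
      have h1 : ∫⁻ w in N, d s w ∂q = 0 := by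
        rw [← withDensity_apply _ hN, ← hs]; exact hN1
      exact (setLIntegral_eq_zero_iff hN (hd_meas_left s)).mp h1
    rw [← lintegral_zero]
    refine lintegral_congr_ae ?_
    filter_upwards [hmN, hdN] with w h1 h2
    by_cases hw : w ∈ N
    · rw [h2 hw, mul_zero]
    · rw [h1 hw, zero_mul]
  set D : W → ℝ≥0∞ := fun w => ∫⁻ s, d s w ∂PS with hD
  have hD_meas : Measurable D := hd_meas.lintegral_prod_left
  -- step 6
  have hDle : ∀ A : Set W, MeasurableSet A → ∫⁻ w in A, D w ∂q ≤ pW A := by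
    intro A hA
    have swap : ∫⁻ w in A, D w ∂q = ∫⁻ s, ∫⁻ w in A, d s w ∂q ∂PS := by
      rw [hD]
      exact lintegral_lintegral_swap (hd_meas.aemeasurable.comp_measurable measurable_swap)
    rw [swap]
    calc ∫⁻ s, ∫⁻ w in A, d s w ∂q ∂PS ≤ ∫⁻ s, κ s A ∂PS := by
          refine lintegral_mono_ae ?_
          filter_upwards [hξ_wd] with s hs
          have : ∫⁻ w in A, d s w ∂q = ξ s A := by rw [hs, withDensity_apply _ hA]
          rw [this]
          exact le_trans (le_of_eq (by rw [hξ_eq s]))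
            ((Measure.singularPart_le (κ s) pW) A)
      _ = pW A := by rw [hpW, bind_apply_eq PS κ hA]
  -- step 7
  have hDm : D ≤ᵐ[q] m :=
    ae_le_of_forall_setLIntegral_le_of_sigmaFinite₀ hD_meas.aemeasurable
      (fun A hA _ => (hDle A hA).trans_eq (by rw [← hpW_wd, withDensity_apply m hA]))
  -- step 8
  have h8 : ∫⁻ w, m w * D w ∂q = 0 := by
    have h81 : ∫⁻ w, m w * D w ∂q = ∫⁻ w, ∫⁻ s, m w * d s w ∂PS ∂q := by
      refine lintegral_congr fun w => ?_
      rw [hD, ← lintegral_const_mul (m w) (hd_meas_right w)]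
    rw [h81]
    have h82 : ∫⁻ w, ∫⁻ s, m w * d s w ∂PS ∂q = ∫⁻ s, ∫⁻ w, m w * d s w ∂q ∂PS := by
      refine lintegral_lintegral_swap ?_
      exact ((hm_meas.comp measurable_fst).mul
        (hd_meas.comp measurable_swap)).aemeasurable
    rw [h82, ← lintegral_zero (μ := PS)]
    exact lintegral_congr_ae hprod
  -- step 9
  have hD0 : ∀ᵐ w ∂q, D w = 0 := by
    have h9 := (lintegral_eq_zero_iff (hm_meas.mul hD_meas)).mp h8
    filter_upwards [h9, hDm] with w h1 h2
    have h1' : m w * D w = 0 := h1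
    rcases mul_eq_zero.mp h1' with h | h
    · exact le_antisymm (h ▸ h2) zero_le
    · exact h
  -- step 10
  have h10 : ∫⁻ s, ξ s Set.univ ∂PS = 0 := by
    have h101 : ∫⁻ s, ξ s Set.univ ∂PS = ∫⁻ s, ∫⁻ w, d s w ∂q ∂PS := by
      refine lintegral_congr_ae ?_
      filter_upwards [hξ_wd] with s hs
      rw [hs, withDensity_apply _ MeasurableSet.univ, Measure.restrict_univ]
    rw [h101, lintegral_lintegral_swap hd_meas.aemeasurable]
    rw [← lintegral_zero (μ := q)]
    exact lintegral_congr_ae hD0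
  have h11 := (lintegral_eq_zero_iff (ξ.measurable_coe MeasurableSet.univ)).mp h10
  filter_upwards [h11] with s hs
  exact Measure.measure_univ_eq_zero.mp hs

lemma ae_of_lintegral_klDiv_ne_top (q : Measure W) [IsProbabilityMeasure q]
    (h : ∫⁻ s, klDiv (κ s) q ∂PS ≠ ⊤) :
    ∀ᵐ s ∂PS, κ s ≪ q ∧ Integrable (llr (κ s) q) (κ s) := by
  rw [lintegral_congr (klDiv_eq_Gfun κ q)] at h
  filter_upwards [ae_lt_top (measurable_Gfun κ q) h] with s hs
  rw [← klDiv_eq_Gfun κ q s] at hs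
  by_contra hc
  rw [klDiv, if_neg hc] at hs
  exact absurd hs (lt_irrefl ⊤)

lemma measurable_lint_kernel {S' W' : Type*} [MeasurableSpace S'] [MeasurableSpace W']
    (κ : Kernel S' W') [IsSFiniteKernel κ] (h : W' → ℝ≥0∞) (hh : Measurable h) :
    Measurable fun s => ∫⁻ w, h w ∂κ s :=
  Measurable.lintegral_kernel_prod_right (f := fun _ w => h w) (by exact hh.comp measurable_snd)

end Kernels

end KLOracle

end KLOracleHelpers

/-- Oracle-prior property of the weight marginal: for every probability measure `q` on `𝒲`,
`∫ KL(κ(s)‖q) dP_S = ∫ KL(κ(s)‖p_W) dP_S + KL(p_W‖q)`; in particular the marginal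
`p_W = ∫ κ(s) dP_S(s)` minimizes `q ↦ ∫ KL(κ(s)‖q) dP_S` over probability measures `q`. -/
theorem marginal_is_oracle_prior
    {S W : Type*} [MeasurableSpace S] [StandardBorelSpace S]
    [MeasurableSpace W] [StandardBorelSpace W]
    (PS : Measure S) [IsProbabilityMeasure PS]
    (κ : Kernel S W) [IsMarkovKernel κ]
    (pW : Measure W) (hpW : pW = PS.bind fun s => κ s) :
    ∀ (q : Measure W), IsProbabilityMeasure q →
      (∫⁻ s, klDiv (κ s) q ∂PS = (∫⁻ s, klDiv (κ s) pW ∂PS) + klDiv pW q) ∧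
      (∫⁻ s, klDiv (κ s) pW ∂PS ≤ ∫⁻ s, klDiv (κ s) q ∂PS) := by
  intro q hq
  have hpWP : IsProbabilityMeasure pW := hpW ▸ KLOracle.isProbabilityMeasure_bind PS κ
  -- lintegral of a fixed `W`-function against the kernel integrates to `pW`
  have hbindl : ∀ h : W → ℝ≥0∞, Measurable h →
      ∫⁻ s, ∫⁻ w, h w ∂κ s ∂PS = ∫⁻ w, h w ∂pW := fun h hh => by
    rw [hpW, KLOracle.lintegral_bind_eq PS κ h hh]
  -- `llr pW q` is integrable against a.e. `κ s` as soon as it is against `pW`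
  have hBint : Integrable (llr pW q) pW → ∀ᵐ s ∂PS, Integrable (llr pW q) (κ s) := by
    intro hint
    have h1 : ∫⁻ s, ∫⁻ w, ENNReal.ofReal ‖llr pW q w‖ ∂κ s ∂PS ≠ ⊤ := by
      rw [hbindl _ ((measurable_llr pW q).norm.ennreal_ofReal)]
      have h2 := hint.2
      rw [hasFiniteIntegral_iff_norm] at h2
      exact h2.ne
    filter_upwards [ae_lt_top
      (KLOracle.measurable_lint_kernel κ _ ((measurable_llr pW q).norm.ennreal_ofReal)) h1]
      with s hs
    exact ⟨(measurable_llr pW q).aestronglyMeasurable,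
      by rw [hasFiniteIntegral_iff_norm]; exact hs⟩
  -- Claim 1 : if the lhs is finite then `pW ≪ q`, a.e. `κ s ≪ pW`, and `llr pW q` integrable
  have hC1 : ∫⁻ s, klDiv (κ s) q ∂PS ≠ ⊤ →
      pW ≪ q ∧ (∀ᵐ s ∂PS, κ s ≪ pW) ∧ Integrable (llr pW q) pW := by
    intro hE
    have hae := KLOracle.ae_of_lintegral_klDiv_ne_top PS κ q hE
    have hpq : pW ≪ q := by
      refine Measure.AbsolutelyContinuous.mk fun A hA hqA => ?_
      rw [hpW, KLOracle.bind_apply_eq PS κ hA, ← lintegral_zero (μ := PS)]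
      refine lintegral_congr_ae ?_
      filter_upwards [hae] with s hs
      exact hs.1 hqA
    have hacpW : ∀ᵐ s ∂PS, κ s ≪ pW :=
      KLOracle.ae_ac_bind PS κ pW q hpW (by filter_upwards [hae] with s hs using hs.1) hpq
    refine ⟨hpq, hacpW, ⟨(measurable_llr pW q).aestronglyMeasurable, ?_⟩⟩
    rw [hasFiniteIntegral_iff_norm]
    have hsplit : ∫⁻ w, ENNReal.ofReal ‖llr pW q w‖ ∂pW
        ≤ ∫⁻ w, ENNReal.ofReal (llr pW q w) ∂pW + ∫⁻ w, ENNReal.ofReal (-llr pW q w) ∂pW := by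
      rw [← lintegral_add_left ((measurable_llr pW q).ennreal_ofReal)]
      refine lintegral_mono fun w => ?_
      rw [Real.norm_eq_abs]
      rcases le_or_gt 0 (llr pW q w) with h0 | h0
      · rw [abs_of_nonneg h0]; exact le_self_add
      · rw [abs_of_neg h0]; exact le_add_self
    have hneg : ∫⁻ w, ENNReal.ofReal (-llr pW q w) ∂pW ≤ 1 :=
      KLOracle.lintegral_ofReal_neg_llr_le_one pW q hpq
    have hpos : ∫⁻ w, ENNReal.ofReal (llr pW q w) ∂pW
        ≤ (∫⁻ s, klDiv (κ s) q ∂PS) + 2 := by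
      rw [← hbindl _ ((measurable_llr pW q).ennreal_ofReal)]
      have hmono : ∀ᵐ s ∂PS, ∫⁻ w, ENNReal.ofReal (llr pW q w) ∂κ s ≤ klDiv (κ s) q + 2 := by
        filter_upwards [hae, hacpW] with s hsq hsp
        have hchain := KLOracle.llr_chain (κ s) pW q hsp hpq
        have hstep : ∫⁻ w, ENNReal.ofReal (llr pW q w) ∂κ s
            ≤ ∫⁻ w, (ENNReal.ofReal (llr (κ s) q w) + ENNReal.ofReal (-llr (κ s) pW w)) ∂κ s := by
          refine lintegral_mono_ae ?_
          filter_upwards [hchain] with w hw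
          have h' : llr pW q w = llr (κ s) q w + -llr (κ s) pW w := by rw [hw]; ring
          rw [h']
          exact ENNReal.ofReal_add_le
        refine hstep.trans ?_
        rw [lintegral_add_left ((measurable_llr _ _).ennreal_ofReal)]
        have h1 : ∫⁻ w, ENNReal.ofReal (llr (κ s) q w) ∂κ s
            ≤ ENNReal.ofReal (∫ w, llr (κ s) q w ∂κ s) + 1 :=
          KLOracle.lintegral_ofReal_llr_le (κ s) q hsq.1 hsq.2
        have h2 : ∫⁻ w, ENNReal.ofReal (-llr (κ s) pW w) ∂κ s ≤ 1 :=
          KLOracle.lintegral_ofReal_neg_llr_le_one (κ s) pW hsp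
        have h3 : ENNReal.ofReal (∫ w, llr (κ s) q w ∂κ s) = klDiv (κ s) q := by
          rw [klDiv, if_pos hsq]
        calc ∫⁻ w, ENNReal.ofReal (llr (κ s) q w) ∂κ s
              + ∫⁻ w, ENNReal.ofReal (-llr (κ s) pW w) ∂κ s
            ≤ (ENNReal.ofReal (∫ w, llr (κ s) q w ∂κ s) + 1) + 1 := by gcongr
          _ = klDiv (κ s) q + 2 := by rw [h3, add_assoc, one_add_one_eq_two]
      calc ∫⁻ s, ∫⁻ w, ENNReal.ofReal (llr pW q w) ∂κ s ∂PS
          ≤ ∫⁻ s, (klDiv (κ s) q + 2) ∂PS := lintegral_mono_ae hmono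
        _ = (∫⁻ s, klDiv (κ s) q ∂PS) + 2 := by
            rw [lintegral_add_right _ measurable_const]
            simp
    refine lt_of_le_of_lt hsplit (lt_of_le_of_lt (add_le_add hpos hneg) ?_)
    exact ENNReal.add_lt_top.mpr ⟨ENNReal.add_lt_top.mpr ⟨hE.lt_top, by simp⟩, by simp⟩
  -- Claim 2 : if the lhs is finite then so is the relative-entropy term w.r.t. `pW`
  have hC2 : ∫⁻ s, klDiv (κ s) q ∂PS ≠ ⊤ → ∫⁻ s, klDiv (κ s) pW ∂PS ≠ ⊤ := by
    intro hE
    obtain ⟨hpq, hacpW, hintpq⟩ := hC1 hE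
    have hae := KLOracle.ae_of_lintegral_klDiv_ne_top PS κ q hE
    have hb := hBint hintpq
    have hmono : ∀ᵐ s ∂PS, klDiv (κ s) pW
        ≤ klDiv (κ s) q + ∫⁻ w, ENNReal.ofReal (-llr pW q w) ∂κ s := by
      filter_upwards [hae, hacpW, hb] with s hsq hsp hsb
      have hchain := KLOracle.llr_chain (κ s) pW q hsp hpq
      have hchain' : llr (κ s) pW =ᵐ[κ s] fun w => llr (κ s) q w - llr pW q w := by
        filter_upwards [hchain] with w hw
        rw [hw]; ring
      have hintp : Integrable (llr (κ s) pW) (κ s) := (hsq.2.sub hsb).congr hchain'.symm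
      rw [klDiv, if_pos ⟨hsp, hintp⟩, klDiv, if_pos hsq]
      have hval : ∫ w, llr (κ s) pW w ∂κ s
          = (∫ w, llr (κ s) q w ∂κ s) + -∫ w, llr pW q w ∂κ s := by
        rw [integral_congr_ae hchain', integral_sub hsq.2 hsb]; ring
      rw [hval]
      refine le_trans ENNReal.ofReal_add_le ?_
      gcongr
      rw [← integral_neg]
      exact KLOracle.ofReal_integral_le_lintegral_ofReal _ _ hsb.neg
    have hle : ∫⁻ s, klDiv (κ s) pW ∂PS
        ≤ (∫⁻ s, klDiv (κ s) q ∂PS) + ∫⁻ w, ENNReal.ofReal (-llr pW q w) ∂pW := by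
      calc ∫⁻ s, klDiv (κ s) pW ∂PS
          ≤ ∫⁻ s, (klDiv (κ s) q + ∫⁻ w, ENNReal.ofReal (-llr pW q w) ∂κ s) ∂PS :=
            lintegral_mono_ae hmono
        _ = (∫⁻ s, klDiv (κ s) q ∂PS)
            + ∫⁻ s, ∫⁻ w, ENNReal.ofReal (-llr pW q w) ∂κ s ∂PS :=
            lintegral_add_right _
              (KLOracle.measurable_lint_kernel κ _ ((measurable_llr pW q).neg.ennreal_ofReal))
        _ = (∫⁻ s, klDiv (κ s) q ∂PS) + ∫⁻ w, ENNReal.ofReal (-llr pW q w) ∂pW := by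
            congr 1; exact hbindl _ ((measurable_llr pW q).neg.ennreal_ofReal)
    refine ne_top_of_le_ne_top ?_ hle
    exact (ENNReal.add_lt_top.mpr ⟨hE.lt_top,
      lt_of_le_of_lt (KLOracle.lintegral_ofReal_neg_llr_le_one pW q hpq) (by simp)⟩).ne
  -- Claim 3 : the identity when both rhs terms are finite
  have hC3 : ∫⁻ s, klDiv (κ s) pW ∂PS ≠ ⊤ → klDiv pW q ≠ ⊤ →
      ∫⁻ s, klDiv (κ s) q ∂PS = (∫⁻ s, klDiv (κ s) pW ∂PS) + klDiv pW q := by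
    intro hF hG
    have hGc : pW ≪ q ∧ Integrable (llr pW q) pW := by
      by_contra hc
      rw [klDiv, if_neg hc] at hG
      exact hG rfl
    obtain ⟨hpq, hintpq⟩ := hGc
    have haeF := KLOracle.ae_of_lintegral_klDiv_ne_top PS κ pW hF
    have hb := hBint hintpq
    set A : S → ℝ := fun s => ∫ w, llr (κ s) pW w ∂κ s with hA
    set B : S → ℝ := fun s => ∫ w, llr pW q w ∂κ s with hB
    have haeq : ∀ᵐ s ∂PS, klDiv (κ s) q = ENNReal.ofReal (A s + B s)
        ∧ klDiv (κ s) pW = ENNReal.ofReal (A s) ∧ 0 ≤ A s ∧ 0 ≤ A s + B s := by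
      filter_upwards [haeF, hb] with s hsF hsb
      have hchain := KLOracle.llr_chain (κ s) pW q hsF.1 hpq
      have hintq : Integrable (llr (κ s) q) (κ s) := (hsF.2.add hsb).congr hchain.symm
      have hvq : ∫ w, llr (κ s) q w ∂κ s = A s + B s := by
        rw [integral_congr_ae hchain, integral_add hsF.2 hsb]
      have hkq : klDiv (κ s) q = ENNReal.ofReal (A s + B s) := by
        rw [klDiv, if_pos ⟨hsF.1.trans hpq, hintq⟩, hvq]
      have hkp : klDiv (κ s) pW = ENNReal.ofReal (A s) := by
        rw [klDiv, if_pos ⟨hsF.1, hsF.2⟩]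
      refine ⟨hkq, hkp, KLOracle.integral_llr_nonneg' (κ s) pW hsF.1 hsF.2, ?_⟩
      rw [← hvq]
      exact KLOracle.integral_llr_nonneg' (κ s) q (hsF.1.trans hpq) hintq
    have hMeq : (fun s => ∫ w, KLOracle.gfun κ pW s w ∂κ s) =ᵐ[PS] A := by
      filter_upwards [haeF] with s hs
      exact integral_congr_ae (hs.1.ae_le (KLOracle.gfun_ae_eq κ pW s))
    have hAmeas : AEStronglyMeasurable A PS :=
      ((StronglyMeasurable.integral_kernel_prod_right
        (by exact (KLOracle.measurable_gfun κ pW).stronglyMeasurable)).aestronglyMeasurable).congr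
        hMeq
    have hAint : Integrable A PS := by
      refine ⟨hAmeas, ?_⟩
      rw [hasFiniteIntegral_iff_norm]
      have heq : ∫⁻ s, ENNReal.ofReal ‖A s‖ ∂PS = ∫⁻ s, klDiv (κ s) pW ∂PS := by
        refine lintegral_congr_ae ?_
        filter_upwards [haeq] with s hs
        rw [Real.norm_eq_abs, abs_of_nonneg hs.2.2.1, hs.2.1]
      rw [heq]
      exact hF.lt_top
    have hBmeas : StronglyMeasurable B :=
      StronglyMeasurable.integral_kernel_prod_right (f := fun _ w => llr pW q w)
        (by exact ((measurable_llr pW q).comp measurable_snd).stronglyMeasurable)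
    have hBint' : Integrable B PS := by
      refine ⟨hBmeas.aestronglyMeasurable, ?_⟩
      rw [hasFiniteIntegral_iff_norm]
      have hle : ∀ᵐ s ∂PS, ENNReal.ofReal ‖B s‖
          ≤ ∫⁻ w, ENNReal.ofReal ‖llr pW q w‖ ∂κ s := by
        refine ae_of_all _ fun s => ?_
        calc ENNReal.ofReal ‖B s‖
            ≤ ENNReal.ofReal ((∫⁻ w, ENNReal.ofReal ‖llr pW q w‖ ∂κ s).toReal) :=
              ENNReal.ofReal_le_ofReal (norm_integral_le_lintegral_norm _)
          _ ≤ _ := ENNReal.ofReal_toReal_le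
      calc ∫⁻ s, ENNReal.ofReal ‖B s‖ ∂PS
          ≤ ∫⁻ s, ∫⁻ w, ENNReal.ofReal ‖llr pW q w‖ ∂κ s ∂PS := lintegral_mono_ae hle
        _ = ∫⁻ w, ENNReal.ofReal ‖llr pW q w‖ ∂pW :=
            hbindl _ ((measurable_llr pW q).norm.ennreal_ofReal)
        _ < ⊤ := by rw [← hasFiniteIntegral_iff_norm]; exact hintpq.2
    have hBval : ∫ s, B s ∂PS = ∫ w, llr pW q w ∂pW := by
      have h := KLOracle.integral_bind_eq PS κ (llr pW q)
        (measurable_llr pW q).stronglyMeasurable (by rw [← hpW]; exact hintpq)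
      rw [← hpW] at h
      exact h.symm
    have hEval : ∫⁻ s, klDiv (κ s) q ∂PS = ENNReal.ofReal (∫ s, (A s + B s) ∂PS) := by
      have h1 : ∫⁻ s, klDiv (κ s) q ∂PS = ∫⁻ s, ENNReal.ofReal (A s + B s) ∂PS :=
        lintegral_congr_ae (by filter_upwards [haeq] with s hs using hs.1)
      rw [h1]
      exact (ofReal_integral_eq_lintegral_ofReal (hAint.add hBint')
        (by filter_upwards [haeq] with s hs using hs.2.2.2)).symm
    have hFval : ∫⁻ s, klDiv (κ s) pW ∂PS = ENNReal.ofReal (∫ s, A s ∂PS) := by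
      have h1 : ∫⁻ s, klDiv (κ s) pW ∂PS = ∫⁻ s, ENNReal.ofReal (A s) ∂PS :=
        lintegral_congr_ae (by filter_upwards [haeq] with s hs using hs.2.1)
      rw [h1]
      exact (ofReal_integral_eq_lintegral_ofReal hAint
        (by filter_upwards [haeq] with s hs using hs.2.2.1)).symm
    have hGval : klDiv pW q = ENNReal.ofReal (∫ s, B s ∂PS) := by
      rw [klDiv, if_pos ⟨hpq, hintpq⟩, hBval]
    rw [hEval, hFval, hGval, integral_add hAint hBint',
      ENNReal.ofReal_add
        (integral_nonneg_of_ae (by filter_upwards [haeq] with s hs using hs.2.2.1))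
        (by rw [hBval]; exact KLOracle.integral_llr_nonneg' pW q hpq hintpq)]
  -- ## conclusion
  by_cases hG : klDiv pW q = ⊤
  · have hE : ∫⁻ s, klDiv (κ s) q ∂PS = ⊤ := by
      by_contra hE
      obtain ⟨hpq, _, hintpq⟩ := hC1 hE
      rw [klDiv, if_pos ⟨hpq, hintpq⟩] at hG
      exact ENNReal.ofReal_ne_top hG
    constructor
    · rw [hE, hG]; simp
    · rw [hE]; exact le_top
  · by_cases hF : ∫⁻ s, klDiv (κ s) pW ∂PS = ⊤
    · have hE : ∫⁻ s, klDiv (κ s) q ∂PS = ⊤ := by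
        by_contra hE
        exact (hC2 hE) hF
      constructor
      · rw [hE, hF]; simp
      · rw [hE]; exact le_top
    · have key := hC3 hF hG
      exact ⟨key, by rw [key]; exact le_self_add⟩
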